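/- For the hierarchical parity model, the partition function satisfies the recursion Z_{k,p} = Z_{k-1,2p-1} · Z_{k-1,2p} · [cosh(βJ_{k,p}) + P_{k-1,2p-1} P_{k-1,2p} sinh(βJ_{k,p})], where P_{k,p} is the thermal expectation of the parity of the spins in sub-system (k,p). -/

import Mathlib

open Real BigOperators Finset

noncomputable section

/-- Map a Boolean spin to ±1. -/
def spin (b : Bool) : ℝ := if b then 1 else -1

/-- Embed index of left half. -/
def finLeft {k : ℕ} (i : Fin (2^k)) : Fin (2^(k+1)) :=
  ⟨i.val, lt_of_lt_of_le i.isLt (Nat.pow_le_pow_right (by norm_num) (Nat.le_succ k))⟩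

/-- Embed index of right half. -/
def finRight {k : ℕ} (i : Fin (2^k)) : Fin (2^(k+1)) :=
  ⟨2^k + i.val, by
    have h := i.isLt
    have h2 : 2^(k+1) = 2^k + 2^k := by rw [pow_succ]; ring
    omega⟩

/-- Parity (product of ±1 spins) of a configuration. -/
def parityProd {m : ℕ} (s : Fin m → Bool) : ℝ := ∏ i, spin (s i)

/-- Hamiltonian of sub-system (k,p) of the hierarchical parity model,
as a function of its own 2^k spins. -/
def Hsub (J : ℕ → ℕ → ℝ) : (k : ℕ) → ℕ → (Fin (2^k) → Bool) → ℝ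
  | 0, p, s => -(J 0 p) * spin (s ⟨0, Nat.two_pow_pos 0⟩)
  | (k+1), p, s =>
      Hsub J k (2*p-1) (fun i => s (finLeft i)) +
      Hsub J k (2*p) (fun i => s (finRight i)) -
      J (k+1) p * parityProd s

/-- Partition function of sub-system (k,p). -/
def Z (J : ℕ → ℕ → ℝ) (β : ℝ) (k p : ℕ) : ℝ :=
  ∑ s : Fin (2^k) → Bool, Real.exp (-β * Hsub J k p s)

/-- Thermal expectation of the parity of sub-system (k,p). -/
def Pexp (J : ℕ → ℕ → ℝ) (β : ℝ) (k p : ℕ) : ℝ :=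
  (∑ s : Fin (2^k) → Bool, parityProd s * Real.exp (-β * Hsub J k p s)) / Z J β k p

-- auxiliary

def halfEquiv (k : ℕ) : Fin (2^k) ⊕ Fin (2^k) ≃ Fin (2^(k+1)) :=
  finSumFinEquiv.trans (finCongr (by rw [pow_succ, mul_two]))

lemma halfEquiv_inl {k : ℕ} (i : Fin (2^k)) : halfEquiv k (Sum.inl i) = finLeft i := by
  apply Fin.ext
  simp [halfEquiv, finLeft]

lemma halfEquiv_inr {k : ℕ} (i : Fin (2^k)) : halfEquiv k (Sum.inr i) = finRight i := by
  apply Fin.ext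
  simp [halfEquiv, finRight, Nat.add_comm]

def glue {k : ℕ} (a b : Fin (2^k) → Bool) : Fin (2^(k+1)) → Bool :=
  fun j => Sum.elim a b ((halfEquiv k).symm j)

lemma glue_left {k : ℕ} (a b : Fin (2^k) → Bool) (i : Fin (2^k)) :
    glue a b (finLeft i) = a i := by
  simp [glue, ← halfEquiv_inl]

lemma glue_right {k : ℕ} (a b : Fin (2^k) → Bool) (i : Fin (2^k)) :
    glue a b (finRight i) = b i := by
  simp [glue, ← halfEquiv_inr]

def splitEquiv (k : ℕ) : ((Fin (2^k) → Bool) × (Fin (2^k) → Bool)) ≃ (Fin (2^(k+1)) → Bool) where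
  toFun p := glue p.1 p.2
  invFun s := (fun i => s (finLeft i), fun i => s (finRight i))
  left_inv p := by ext i <;> simp [glue_left, glue_right]
  right_inv s := by
    funext j
    rcases h : (halfEquiv k).symm j with i | i
    · have : j = finLeft i := by rw [← halfEquiv_inl, ← h, Equiv.apply_symm_apply]
      simp [this, glue_left]
    · have : j = finRight i := by rw [← halfEquiv_inr, ← h, Equiv.apply_symm_apply]
      simp [this, glue_right]

lemma sum_split {k : ℕ} (F : (Fin (2^(k+1)) → Bool) → ℝ) :
    ∑ s : Fin (2^(k+1)) → Bool, F s
      = ∑ a : Fin (2^k) → Bool, ∑ b : Fin (2^k) → Bool, F (glue a b) := by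
  rw [← Equiv.sum_comp (splitEquiv k) F, Fintype.sum_prod_type]
  rfl

lemma parity_glue {k : ℕ} (a b : Fin (2^k) → Bool) :
    parityProd (glue a b) = parityProd a * parityProd b := by
  unfold parityProd
  rw [← Equiv.prod_comp (halfEquiv k) (fun j => spin (glue a b j)), Fintype.prod_sum_type]
  congr 1
  · exact Finset.prod_congr rfl (fun i _ => by rw [halfEquiv_inl, glue_left])
  · exact Finset.prod_congr rfl (fun i _ => by rw [halfEquiv_inr, glue_right])

lemma parity_sq {m : ℕ} (s : Fin m → Bool)  : parityProd s = 1 ∨ parityProd s = -1 := by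
  unfold parityProd
  induction (Finset.univ : Finset (Fin m)) using Finset.induction with
  | empty => simp
  | insert _ _ h ih =>
    rw [Finset.prod_insert h]
    rcases ih with h1 | h1 <;> rw [h1] <;> unfold spin <;> split <;> norm_num

lemma exp_pm (x t : ℝ) (ht : t = 1 ∨ t = -1) :
    Real.exp (x * t) = Real.cosh x + t * Real.sinh x := by
  rcases ht with h | h <;> rw [h] <;> simp [Real.cosh_eq, Real.sinh_eq] <;> ring

lemma Z_pos (J : ℕ → ℕ → ℝ) (β : ℝ) (k p : ℕ) : 0 < Z J β k p :=
  Finset.sum_pos (fun s _ => Real.exp_pos _) ⟨fun _ => true, Finset.mem_univ _⟩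

/-- partition function recursion. -/
theorem partition_function_recursion (J : ℕ → ℕ → ℝ) (β : ℝ) (hβ : 0 < β) (k p : ℕ) (hp : 1 ≤ p) :
    Z J β (k+1) p =
      Z J β k (2*p-1) * Z J β k (2*p) *
        (Real.cosh (β * J (k+1) p) +
          Pexp J β k (2*p-1) * Pexp J β k (2*p) * Real.sinh (β * J (k+1) p)) := by
  have hZL := Z_pos J β k (2*p-1)
  have hZR := Z_pos J β k (2*p)
  set c := Real.cosh (β * J (k+1) p)
  set sh := Real.sinh (β * J (k+1) p)
  set NL := ∑ s : Fin (2^k) → Bool, parityProd s * Real.exp (-β * Hsub J k (2*p-1) s)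
  set NR := ∑ s : Fin (2^k) → Bool, parityProd s * Real.exp (-β * Hsub J k (2*p) s)
  have key : Z J β (k+1) p = Z J β k (2*p-1) * Z J β k (2*p) * c + NL * NR * sh := by
    unfold Z
    rw [sum_split]
    have step : ∀ a b : Fin (2^k) → Bool,
        Real.exp (-β * Hsub J (k+1) p (glue a b))
          = Real.exp (-β * Hsub J k (2*p-1) a) * Real.exp (-β * Hsub J k (2*p) b) * c
            + (parityProd a * Real.exp (-β * Hsub J k (2*p-1) a)) *
              (parityProd b * Real.exp (-β * Hsub J k (2*p) b)) * sh := by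
      intro a b
      have hH : Hsub J (k+1) p (glue a b)
          = Hsub J k (2*p-1) a + Hsub J k (2*p) b
            - J (k+1) p * (parityProd a * parityProd b) := by
        show Hsub J k (2*p-1) (fun i => glue a b (finLeft i)) +
          Hsub J k (2*p) (fun i => glue a b (finRight i)) -
          J (k+1) p * parityProd (glue a b) = _
        rw [parity_glue]
        congr 1
        congr 1 <;> [congr 1; congr 1] <;> funext i <;>
          simp [glue_left, glue_right]
      have hpm : parityProd a * parityProd b = 1 ∨ parityProd a * parityProd b = -1 := by
        rcases parity_sq a with h1 | h1 <;> rcases parity_sq b with h2 | h2 <;>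
          rw [h1, h2] <;> norm_num
      rw [hH]
      have : -β * (Hsub J k (2*p-1) a + Hsub J k (2*p) b
            - J (k+1) p * (parityProd a * parityProd b))
          = (-β * Hsub J k (2*p-1) a) + (-β * Hsub J k (2*p) b)
            + (β * J (k+1) p) * (parityProd a * parityProd b) := by ring
      rw [this, Real.exp_add, Real.exp_add, exp_pm _ _ hpm]
      ring
    rw [Finset.sum_congr rfl (fun a _ => Finset.sum_congr rfl (fun b _ => step a b))]
    have h1 : ∀ (f g : (Fin (2^k) → Bool) → ℝ) (c : ℝ),
        ∑ a : Fin (2^k) → Bool, ∑ b : Fin (2^k) → Bool, f a * g b * c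
          = (∑ a, f a) * (∑ b, g b) * c := by
      intro f g c
      rw [Finset.sum_mul_sum, Finset.sum_mul]
      exact Finset.sum_congr rfl fun a _ => by rw [Finset.sum_mul]
    simp only [Finset.sum_add_distrib, h1]
    rfl
  have hPL : Pexp J β k (2*p-1) = NL / Z J β k (2*p-1) := rfl
  have hPR : Pexp J β k (2*p) = NR / Z J β k (2*p) := rfl
  rw [key, hPL, hPR]
  field_simp

end
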